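/- Let T = (V, ≻) be a tournament on n vertices and let v ∈ V be a vertex whose out-degree (the number of u ∈ V with v ≻ u) is strictly less than (n−1)/2. Then v does not belong to the Slater set of T. -/

import Mathlib

open scoped Classical

variable {V : Type*}

/-- A tournament: an irreflexive relation such that for distinct `u, v`
exactly one of `r u v` and `r v u` holds. -/
def IsTournament (r : V → V → Prop) : Prop :=
  (∀ v, ¬ r v v) ∧ ∀ u v : V, u ≠ v → (r u v ↔ ¬ r v u)

/-- The Slater score of a strict order `s` w.r.t. the dominance relation `r`:
the number of ordered pairs `(x, y)` with `x > y` (i.e. `s x y`) and `x ≻ y` (i.e. `r x y`). -/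
noncomputable def slaterScore (r s : V → V → Prop) : ℕ :=
  {p : V × V | s p.1 p.2 ∧ r p.1 p.2}.ncard

/-- `s` is a Slater order for the tournament `r`: a strict total order of maximum Slater score. -/
def IsSlaterOrder (r s : V → V → Prop) : Prop :=
  IsStrictTotalOrder V s ∧
    ∀ s' : V → V → Prop, IsStrictTotalOrder V s' → slaterScore r s' ≤ slaterScore r s

/-- The Slater set: maximum elements of Slater orders. -/
def slaterSet (r : V → V → Prop) : Set V :=
  {m | ∃ s : V → V → Prop, IsSlaterOrder r s ∧ ∀ x, x ≠ m → s m x}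

/-- if the out-degree of `v` is strictly less than `(n-1)/2`
then `v` is not in the Slater set. -/
theorem slater_excludes_low_outdegree [Fintype V] (r : V → V → Prop)
    (hT : IsTournament r) (v : V)
    (hdeg : 2 * {u | r v u}.ncard < Fintype.card V - 1) :
    v ∉ slaterSet r := by
  rintro ⟨s, ⟨hs, hmax⟩, htop⟩
  obtain ⟨hirr, hcomp⟩ := hT
  have hstri := hs.trichotomous
  have hstrans := hs.trans
  have hsirr := hs.irrefl
  -- the modified order: v moved to the bottom
  set s' : V → V → Prop := fun x y => (y = v ∧ x ≠ v) ∨ (x ≠ v ∧ y ≠ v ∧ s x y) with hs'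
  have hs'v : ∀ z, ¬ s' v z := by
    rintro z (⟨_, h⟩ | ⟨h, _⟩) <;> exact h rfl
  have hs'sto : IsStrictTotalOrder V s' := by
    have htrans : ∀ a b c, s' a b → s' b c → s' a c := by
      intro a b c hab hbc
      have hav : a ≠ v := by rcases hab with ⟨_, h⟩ | ⟨h, _⟩ <;> exact h
      have hbv : b ≠ v := by
        intro h; exact hs'v c (h ▸ hbc)
      by_cases hcv : c = v
      · exact Or.inl ⟨hcv, hav⟩
      · have hsab : s a b := by
          rcases hab with ⟨h, _⟩ | ⟨_, _, h⟩; exact absurd h hbv; exact h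
        have hsbc : s b c := by
          rcases hbc with ⟨h, _⟩ | ⟨_, _, h⟩; exact absurd h hcv; exact h
        exact Or.inr ⟨hav, hcv, hstrans _ _ _ hsab hsbc⟩
    have htri : ∀ a b, s' a b ∨ a = b ∨ s' b a := by
      intro a b
      by_cases hab : a = b
      · exact Or.inr (Or.inl hab)
      by_cases hav : a = v
      · exact Or.inr (Or.inr (Or.inl ⟨hav, fun h => hab (hav.trans h.symm)⟩))
      by_cases hbv : b = v
      · exact Or.inl (Or.inl ⟨hbv, hav⟩)
      · rcases (by
            by_cases h1 : s a b
            · exact Or.inl h1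
            by_cases h2 : s b a
            · exact Or.inr (Or.inr h2)
            exact Or.inr (Or.inl (hstri a b h1 h2)) : s a b ∨ a = b ∨ s b a) with h | h | h
        · exact Or.inl (Or.inr ⟨hav, hbv, h⟩)
        · exact Or.inr (Or.inl h)
        · exact Or.inr (Or.inr (Or.inr ⟨hbv, hav, h⟩))
    haveI : IsTrans V s' := ⟨htrans⟩
    haveI : IsIrrefl V s' := ⟨fun a h => by
      rcases h with ⟨h1, h2⟩ | ⟨h1, h2, h3⟩
      · exact h2 h1
      · exact hsirr a h3⟩
    haveI : IsTrichotomous V s' := ⟨fun a b h1 h2 => by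
      rcases htri a b with h | h | h
      · exact absurd h h1
      · exact h
      · exact absurd h h2⟩
    haveI : IsStrictOrder V s' := { }
    exact { }
  -- the common part of the two scores
  set A : Set (V × V) := {p : V × V | p.1 ≠ v ∧ p.2 ≠ v ∧ s p.1 p.2 ∧ r p.1 p.2} with hA
  have hsasym : ∀ a b, s a b → ¬ s b a := by
    intro a b h1 h2
    exact hsirr a (hstrans _ _ _ h1 h2)
  -- decomposition of the score of s
  have hPs : {p : V × V | s p.1 p.2 ∧ r p.1 p.2}
      = ((fun u => (v, u)) '' {u | r v u}) ∪ A := by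
    ext ⟨x, y⟩
    simp only [Set.mem_setOf_eq, Set.mem_union, Set.mem_image, Prod.mk.injEq, hA]
    constructor
    · rintro ⟨hsxy, hrxy⟩
      by_cases hx : x = v
      · exact Or.inl ⟨y, hx ▸ hrxy, hx.symm, rfl⟩
      · refine Or.inr ⟨hx, ?_, hsxy, hrxy⟩
        intro hy
        exact hsasym _ _ hsxy (hy ▸ htop x (hy ▸ hx))
    · rintro (⟨u, hu, rfl, rfl⟩ | ⟨hx, hy, hsxy, hrxy⟩)
      · refine ⟨htop u ?_, hu⟩
        intro h; exact hirr v (h ▸ hu)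
      · exact ⟨hsxy, hrxy⟩
  have hPs' : {p : V × V | s' p.1 p.2 ∧ r p.1 p.2}
      = ((fun u => (u, v)) '' {u | r u v}) ∪ A := by
    ext ⟨x, y⟩
    simp only [Set.mem_setOf_eq, Set.mem_union, Set.mem_image, Prod.mk.injEq, hA]
    constructor
    · rintro ⟨hsxy, hrxy⟩
      rcases hsxy with ⟨hy, hx⟩ | ⟨hx, hy, hsxy⟩
      · exact Or.inl ⟨x, hy ▸ hrxy, rfl, hy.symm⟩
      · exact Or.inr ⟨hx, hy, hsxy, hrxy⟩
    · rintro (⟨u, hu, rfl, rfl⟩ | ⟨hx, hy, hsxy, hrxy⟩)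
      · refine ⟨Or.inl ⟨rfl, ?_⟩, hu⟩
        intro h; exact hirr v (h ▸ hu)
      · exact ⟨Or.inr ⟨hx, hy, hsxy⟩, hrxy⟩
  have hscore : slaterScore r s = {u | r v u}.ncard + A.ncard := by
    rw [slaterScore, hPs, Set.ncard_union_eq, Set.ncard_image_of_injective]
    · intro a b h; exact (Prod.mk.injEq _ _ _ _ ▸ h).2
    · rw [Set.disjoint_left]
      rintro ⟨x, y⟩ ⟨u, _, rfl, rfl⟩ ⟨h, _⟩
      exact h rfl
  have hscore' : slaterScore r s' = {u | r u v}.ncard + A.ncard := by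
    rw [slaterScore, hPs', Set.ncard_union_eq, Set.ncard_image_of_injective]
    · intro a b h; exact (Prod.mk.injEq _ _ _ _ ▸ h).1
    · rw [Set.disjoint_left]
      rintro ⟨x, y⟩ ⟨u, _, rfl, rfl⟩ ⟨_, h, _⟩
      exact h rfl
  -- out-degree + in-degree = n - 1
  have hsplit : {u | r v u} ∪ {u | r u v} = {u : V | u ≠ v} := by
    ext u
    simp only [Set.mem_union, Set.mem_setOf_eq]
    constructor
    · rintro (h | h) <;> (intro he; exact hirr v (he ▸ h))
    · intro h
      by_cases hv : r v u
      · exact Or.inl hv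
      · exact Or.inr ((hcomp u v h).2 hv)
  have hdisj : Disjoint {u | r v u} {u : V | r u v} := by
    rw [Set.disjoint_left]
    intro u h1 h2
    by_cases he : u = v
    · exact hirr v (he ▸ h1)
    · exact (hcomp u v he).1 h2 h1
  have hcard : {u | r v u}.ncard + {u | r u v}.ncard = Fintype.card V - 1 := by
    rw [← Set.ncard_union_eq hdisj (Set.toFinite _) (Set.toFinite _), hsplit]
    have : ({u : V | u ≠ v}) = ({v} : Set V)ᶜ := by
      ext u; simp
    rw [this]
    have h2 := Set.ncard_add_ncard_compl ({v} : Set V)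
    simp only [Set.ncard_singleton, Nat.card_eq_fintype_card] at h2
    omega
  have hlt : slaterScore r s < slaterScore r s' := by
    rw [hscore, hscore']
    have : {u | r v u}.ncard < {u | r u v}.ncard := by omega
    omega
  exact absurd (hmax s' hs'sto) (not_le.mpr hlt)
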